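/- Let Σ : [0,T] → Mat(d,d,ℝ) be a differentiable matrix-valued function satisfying dΣ/dt = -½β(t)(D Σ + Σ Dᵀ) + β(t) I with Σ(0) = I, where β(t) ≥ 0 is continuous and D is a fixed matrix with D + Dᵀ ⪰ 2λ_min I for some λ_min > 0. Then for every unit vector x and every t ∈ [0,T], xᵀ Σ(t) x ≤ max{1, 1/λ_min}. -/

import Mathlib

open Set Matrix
attribute [local instance] Matrix.normedAddCommGroup Matrix.normedSpace


section Helpers
set_option synthInstance.maxHeartbeats 400000 in
lemma aux_exp_deriv {E : Type*} [NormedAddCommGroup E] [NormedSpace ℝ E] [CompleteSpace E]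
    (L : E →L[ℝ] E) (x : E) {g : ℝ → ℝ} {g' : ℝ} {s : ℝ} (hg : HasDerivAt g g' s) :
    HasDerivAt (fun r => NormedSpace.exp (g r • L) x)
      (g' • L (NormedSpace.exp (g s • L) x)) s := by
  have h1 := hasDerivAt_exp_smul_const (𝕂 := ℝ) L (g s)
  have h2 : HasDerivAt (fun r => NormedSpace.exp (g r • L))
      (g' • (NormedSpace.exp (g s • L) * L)) s := h1.scomp s hg
  have h3 := h2.clm_apply (hasDerivAt_const s x)
  have hcomm : NormedSpace.exp (g s • L) * L = L * NormedSpace.exp (g s • L) :=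
    ((Commute.refl L).smul_left (g s)).exp_left
  simpa [hcomm] using h3

lemma aux_dot {d : ℕ} {y w : ℝ → (Fin d → ℝ)} {y' w' : Fin d → ℝ} {t : ℝ}
    (hy : HasDerivAt y y' t) (hw : HasDerivAt w w' t) :
    HasDerivAt (fun s => y s ⬝ᵥ w s) (y' ⬝ᵥ w t + y t ⬝ᵥ w') t := by
  simp only [dotProduct]
  have h := HasDerivAt.sum (u := Finset.univ)
    (fun i _ => ((hasDerivAt_pi.1 hy i).mul (hasDerivAt_pi.1 hw i)))
  convert h using 1
  · rfl
  · rfl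
  · ext s; simp [Finset.sum_apply]
  rw [← Finset.sum_add_distrib]

lemma aux_mulVec {d : ℕ} {M : ℝ → Matrix (Fin d) (Fin d) ℝ} {M' : Matrix (Fin d) (Fin d) ℝ}
    {y : ℝ → (Fin d → ℝ)} {y' : Fin d → ℝ} {t : ℝ}
    (hM : HasDerivAt M M' t) (hy : HasDerivAt y y' t) :
    HasDerivAt (fun s => M s *ᵥ y s) (M' *ᵥ y t + M t *ᵥ y') t := by
  rw [hasDerivAt_pi]
  intro j
  have h := HasDerivAt.sum (u := Finset.univ)
    (fun k _ => ((hasDerivAt_pi.1 (hasDerivAt_pi.1 hM j) k).mul (hasDerivAt_pi.1 hy k)))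
  simp only [mulVec, dotProduct, Pi.add_apply]
  convert h using 1
  · ext s; simp [Finset.sum_apply]
  rw [← Finset.sum_add_distrib]

lemma aux_symm {d : ℕ} (D : Matrix (Fin d) (Fin d) ℝ) (v : Fin d → ℝ) :
    v ⬝ᵥ (D *ᵥ v) = v ⬝ᵥ (Dᵀ *ᵥ v) := by
  rw [dotProduct_mulVec v Dᵀ v, vecMul_transpose, dotProduct_comm]

lemma aux_zbound {d : ℕ} (D : Matrix (Fin d) (Fin d) ℝ) (lam : ℝ)
    (hD : ∀ v : Fin d → ℝ, 2 * lam * (v ⬝ᵥ v) ≤ v ⬝ᵥ ((D + Dᵀ) *ᵥ v))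
    (L : (Fin d → ℝ) →L[ℝ] (Fin d → ℝ)) (hL : ∀ v, L v = Dᵀ *ᵥ v)
    (x : Fin d → ℝ) {c : ℝ} (hc : 0 ≤ c) :
    (NormedSpace.exp ((-c/2) • L) x) ⬝ᵥ (NormedSpace.exp ((-c/2) • L) x)
      ≤ Real.exp (-(lam * c)) * (x ⬝ᵥ x) := by
  set z : ℝ → Fin d → ℝ := fun b => NormedSpace.exp ((-b/2) • L) x with hzdef
  have hzd : ∀ b, HasDerivAt z ((-1/2 : ℝ) • L (z b)) b := by
    intro b
    exact aux_exp_deriv L x (g := fun b => -b/2) ((hasDerivAt_id b).neg.div_const 2)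
  have hdot : ∀ b, HasDerivAt (fun b => z b ⬝ᵥ z b) (-(z b ⬝ᵥ (Dᵀ *ᵥ z b))) b := by
    intro b
    have h := aux_dot (hzd b) (hzd b)
    have hLz : L (z b) = Dᵀ *ᵥ z b := hL _
    rw [hLz] at h
    convert h using 1
    rw [smul_dotProduct, dotProduct_smul, dotProduct_comm (Dᵀ *ᵥ z b) (z b)]
    simp only [smul_eq_mul]
    ring
  have key : ∀ b, lam * (z b ⬝ᵥ z b) ≤ z b ⬝ᵥ (Dᵀ *ᵥ z b) := by
    intro b
    have h1 := hD (z b)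
    have h2 : z b ⬝ᵥ ((D + Dᵀ) *ᵥ z b) = 2 * (z b ⬝ᵥ (Dᵀ *ᵥ z b)) := by
      rw [add_mulVec, dotProduct_add, aux_symm]
      ring
    linarith
  set h : ℝ → ℝ := fun b => Real.exp (lam * b) * (z b ⬝ᵥ z b) with hhdef
  have hhd : ∀ b, HasDerivAt h
      (Real.exp (lam * b) * (lam * (z b ⬝ᵥ z b) - z b ⬝ᵥ (Dᵀ *ᵥ z b))) b := by
    intro b
    have he : HasDerivAt (fun b => Real.exp (lam * b)) (lam * Real.exp (lam * b)) b := by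
      simpa [mul_comm, Function.comp_def] using (Real.hasDerivAt_exp (lam * b)).comp b ((hasDerivAt_id b).const_mul lam)
    have := he.mul (hdot b)
    convert this using 1
    · rfl
    · rfl
    · rfl
    ring
  have hanti : Antitone h := by
    apply antitone_of_deriv_nonpos (fun b => (hhd b).differentiableAt)
    intro b
    rw [(hhd b).deriv]
    have := key b
    nlinarith [Real.exp_pos (lam * b)]
  have hmono : Real.exp (lam * c) * (z c ⬝ᵥ z c) ≤ x ⬝ᵥ x := by
    have hz0 : z 0 = x := by simp [hzdef, NormedSpace.exp_zero]
    have := hanti hc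
    simpa [hhdef, hz0] using this
  have hpos := Real.exp_pos (lam * c)
  show z c ⬝ᵥ z c ≤ Real.exp (-(lam * c)) * (x ⬝ᵥ x)
  rw [Real.exp_neg, inv_mul_eq_div, le_div_iff₀ hpos]
  nlinarith [hmono]
end Helpers

/-- Bound on the quadratic form of the solution of the Lyapunov-type matrix ODE
`dΣ/dt = -½β(t)(DΣ + ΣDᵀ) + β(t)I`, `Σ(0) = I`, when `D + Dᵀ ⪰ 2λ_min I`. -/
theorem stmt5 (d : ℕ) (T : ℝ) (hT : 0 ≤ T)
    (S : ℝ → Matrix (Fin d) (Fin d) ℝ) (hS : Differentiable ℝ S)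
    (β : ℝ → ℝ) (hβc : Continuous β) (hβ0 : ∀ t ∈ Icc 0 T, 0 ≤ β t)
    (D : Matrix (Fin d) (Fin d) ℝ) (lam : ℝ) (hlam : 0 < lam)
    (hD : ∀ x : Fin d → ℝ, 2 * lam * (x ⬝ᵥ x) ≤ x ⬝ᵥ ((D + Dᵀ) *ᵥ x))
    (hS0 : S 0 = 1)
    (hode : ∀ t ∈ Icc 0 T,
      deriv S t = (-(((1:ℝ)/2) * β t)) • (D * S t + S t * Dᵀ) + β t • (1 : Matrix (Fin d) (Fin d) ℝ)) :
    ∀ x : Fin d → ℝ, x ⬝ᵥ x = 1 → ∀ t ∈ Icc 0 T, x ⬝ᵥ (S t *ᵥ x) ≤ max 1 (1 / lam) := by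
  intro x hx t ht
  obtain ⟨ht0, htT⟩ := ht
  set L : (Fin d → ℝ) →L[ℝ] (Fin d → ℝ) :=
    LinearMap.toContinuousLinearMap (Matrix.mulVecLin Dᵀ) with hLdef
  have hL : ∀ v, L v = Dᵀ *ᵥ v := fun v => rfl
  set B : ℝ → ℝ := fun r => ∫ s in (0:ℝ)..r, β s with hBdef
  have hB : ∀ r, HasDerivAt B (β r) r := fun r => (hβc.integral_hasStrictDerivAt 0 r).hasDerivAt
  have hBcont : Continuous B := Differentiable.continuous (fun r => (hB r).differentiableAt)
  have hB0 : B 0 = 0 := intervalIntegral.integral_same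
  have hBsub : ∀ s, B t - B s = ∫ r in s..t, β r := by
    intro s
    exact intervalIntegral.integral_interval_sub_left (hβc.intervalIntegrable 0 t)
      (hβc.intervalIntegrable 0 s)
  have hBmono : ∀ s ∈ Icc (0:ℝ) t, 0 ≤ B t - B s := by
    intro s hs
    rw [hBsub]
    exact intervalIntegral.integral_nonneg hs.2
      (fun r hr => hβ0 r ⟨le_trans hs.1 hr.1, le_trans hr.2 htT⟩)
  have hBt0 : 0 ≤ B t := by
    have := hBmono 0 ⟨le_refl 0, ht0⟩
    rw [hB0] at this; linarith
  set y : ℝ → Fin d → ℝ := fun s => NormedSpace.exp (((B s - B t)/2) • L) x with hydef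
  have hy : ∀ s, HasDerivAt y ((β s / 2) • L (y s)) s := by
    intro s
    exact aux_exp_deriv L x (g := fun s => (B s - B t)/2) (((hB s).sub_const (B t)).div_const 2)
  have hycont : Continuous y := Differentiable.continuous (fun s => (hy s).differentiableAt)
  have hyycont : Continuous fun s => y s ⬝ᵥ y s := by
    simp only [dotProduct]
    exact continuous_finset_sum _ fun i _ =>
      ((continuous_apply i).comp hycont).mul ((continuous_apply i).comp hycont)
  set φ : ℝ → ℝ := fun s => y s ⬝ᵥ (S s *ᵥ y s) with hφdef
  have hyt : y t = x := by
    have h0 : ((B t - B t)/2 : ℝ) = 0 := by ring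
    simp [hydef, h0, NormedSpace.exp_zero]
  have hφd : ∀ s ∈ Icc (0:ℝ) t, HasDerivAt φ (β s * (y s ⬝ᵥ y s)) s := by
    intro s hs
    have hSd : HasDerivAt S
        ((-(((1:ℝ)/2) * β s)) • (D * S s + S s * Dᵀ) + β s • (1 : Matrix (Fin d) (Fin d) ℝ)) s := by
      have h := (hS s).hasDerivAt
      convert h using 1
      · rfl
      · rfl
      · rfl
      exact (hode s ⟨hs.1, hs.2.trans htT⟩).symm
    have h := aux_dot (hy s) (aux_mulVec hSd (hy s))
    convert h using 1
    rw [hL]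
    have e1 : (Dᵀ *ᵥ y s) ⬝ᵥ (S s *ᵥ y s) = y s ⬝ᵥ ((D * S s) *ᵥ y s) := by
      rw [mulVec_transpose, ← dotProduct_mulVec, mulVec_mulVec]
    simp only [smul_dotProduct, add_mulVec, smul_mulVec, mulVec_smul, one_mulVec,
      dotProduct_add, dotProduct_smul, smul_eq_mul, mulVec_mulVec]
    rw [e1]
    ring
  have hint1 : IntervalIntegrable (fun s => β s * (y s ⬝ᵥ y s)) MeasureTheory.volume 0 t :=
    (hβc.mul hyycont).intervalIntegrable 0 t
  have hftc1 : (∫ s in (0:ℝ)..t, β s * (y s ⬝ᵥ y s)) = φ t - φ 0 := by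
    apply intervalIntegral.integral_eq_sub_of_hasDerivAt
    · intro s hs
      rw [uIcc_of_le ht0] at hs
      exact hφd s hs
    · exact hint1
  have hφt : φ t = x ⬝ᵥ (S t *ᵥ x) := by rw [hφdef]; simp [hyt]
  have hy0 : y 0 = NormedSpace.exp ((-(B t)/2) • L) x := by
    rw [show (-(B t)/2 : ℝ) = (B 0 - B t)/2 by rw [hB0]; ring]
  have hφ0 : φ 0 ≤ Real.exp (-(lam * B t)) := by
    have : φ 0 = y 0 ⬝ᵥ y 0 := by rw [hφdef]; simp [hS0, one_mulVec]
    rw [this, hy0]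
    have := aux_zbound D lam hD L hL x hBt0
    rwa [hx, mul_one] at this
  have hybound : ∀ s ∈ Icc (0:ℝ) t, y s ⬝ᵥ y s ≤ Real.exp (lam * (B s - B t)) := by
    intro s hs
    have hys : y s = NormedSpace.exp ((-(B t - B s)/2) • L) x := by
      rw [show (-(B t - B s)/2 : ℝ) = (B s - B t)/2 by ring]
    rw [hys]
    have := aux_zbound D lam hD L hL x (hBmono s hs)
    rw [hx, mul_one] at this
    calc (NormedSpace.exp ((-(B t - B s)/2) • L) x) ⬝ᵥ _ ≤ Real.exp (-(lam * (B t - B s))) := this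
      _ = Real.exp (lam * (B s - B t)) := by ring_nf
  have hint2 : IntervalIntegrable (fun s => β s * Real.exp (lam * (B s - B t)))
      MeasureTheory.volume 0 t :=
    (hβc.mul (Real.continuous_exp.comp ((continuous_const.mul
      (hBcont.sub continuous_const))))).intervalIntegrable 0 t
  have hcomp : (∫ s in (0:ℝ)..t, β s * (y s ⬝ᵥ y s))
      ≤ ∫ s in (0:ℝ)..t, β s * Real.exp (lam * (B s - B t)) := by
    apply intervalIntegral.integral_mono_on ht0 hint1 hint2
    intro s hs
    have hb := hβ0 s ⟨hs.1, hs.2.trans htT⟩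
    exact mul_le_mul_of_nonneg_left (hybound s hs) hb
  have hftc2 : (∫ s in (0:ℝ)..t, β s * Real.exp (lam * (B s - B t)))
      = (1 - Real.exp (-(lam * B t))) / lam := by
    have hF : ∀ s ∈ uIcc (0:ℝ) t, HasDerivAt (fun s => Real.exp (lam * (B s - B t)) / lam)
        (β s * Real.exp (lam * (B s - B t))) s := by
      intro s _
      have h1 : HasDerivAt (fun s => lam * (B s - B t)) (lam * β s) s :=
        ((hB s).sub_const (B t)).const_mul lam
      have h2 := ((Real.hasDerivAt_exp (lam * (B s - B t))).comp s h1).div_const lam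
      convert h2 using 1
      · rfl
      · rfl
      · rfl
      field_simp
    rw [intervalIntegral.integral_eq_sub_of_hasDerivAt hF hint2]
    rw [show B t - B t = 0 by ring, hB0]
    simp [Real.exp_zero]
    ring
  -- final assembly
  have hec1 : Real.exp (-(lam * B t)) ≤ 1 :=
    Real.exp_le_one_iff.mpr (by nlinarith)
  have hecpos : 0 < Real.exp (-(lam * B t)) := Real.exp_pos _
  have hfinal : x ⬝ᵥ (S t *ᵥ x)
      ≤ Real.exp (-(lam * B t)) + (1 - Real.exp (-(lam * B t))) / lam := by
    rw [← hφt]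
    have : φ t = φ 0 + ∫ s in (0:ℝ)..t, β s * (y s ⬝ᵥ y s) := by rw [hftc1]; ring
    rw [this]
    have := hcomp.trans_eq hftc2
    linarith
  set ec := Real.exp (-(lam * B t)) with hec
  rcases le_total lam 1 with hcase | hcase
  · have h1 : ec + (1 - ec) / lam ≤ 1 / lam := by
      have h2 : ec ≤ ec / lam := by
        rw [le_div_iff₀ hlam]; nlinarith
      calc ec + (1 - ec) / lam ≤ ec / lam + (1 - ec) / lam := by linarith
        _ = 1 / lam := by rw [← add_div]; norm_num
    exact hfinal.trans (h1.trans (le_max_right _ _))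
  · have h1 : ec + (1 - ec) / lam ≤ 1 := by
      have : (1 - ec) / lam ≤ (1 - ec) := by
        apply div_le_self (by linarith) hcase
      linarith
    exact hfinal.trans (h1.trans (le_max_left _ _))
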